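/- Let Y ⊆ ℝ^m be finite, y* ∈ Y, and Z ~ N(0, I_m). If θ̂ minimizes the perturbed loss L(θ) = E[max_{y ∈ Y}(θ+Z)ᵀy] − θᵀy* over ℝ^m, then E[argmax_{y ∈ Y}(θ̂+Z)ᵀy] = y*; i.e., at any minimizer, the expected perturbed CO-layer solution equals the target full-information solution. -/

import Mathlib

open scoped RealInnerProductSpace
open MeasureTheory Filter Topology

/-- `Z` is a standard Gaussian random vector in `ℝ^m`: its coordinates are independent
and each is distributed as `N(0,1)`. -/
def IsStdGaussian {Ω : Type*} [MeasurableSpace Ω] (μ : Measure Ω) {m : ℕ}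
    (Z : Ω → EuclideanSpace ℝ (Fin m)) : Prop :=
  (∀ i, Measure.map (fun ω => Z ω i) μ = ProbabilityTheory.gaussianReal 0 1) ∧
    ProbabilityTheory.iIndepFun (β := fun _ : Fin m => ℝ)
      (fun i ω => Z ω i) μ

section Aux

variable {m : ℕ}

lemma StdGaussianAux.gauss_int :
    Integrable (fun x : ℝ => x) (ProbabilityTheory.gaussianReal 0 1) := by
  rw [ProbabilityTheory.gaussianReal_of_var_ne_zero 0 one_ne_zero]
  rw [integrable_withDensity_iff (ProbabilityTheory.measurable_gaussianPDF 0 1)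
    (Filter.Eventually.of_forall fun x => ENNReal.ofReal_lt_top)]
  simp only [ProbabilityTheory.gaussianPDF_def,
    ENNReal.toReal_ofReal (ProbabilityTheory.gaussianPDFReal_nonneg 0 1 _)]
  unfold ProbabilityTheory.gaussianPDFReal
  simp only [sub_zero, NNReal.coe_one, mul_one]
  have h := (integrable_mul_exp_neg_mul_sq (b := 2⁻¹) (by norm_num)).const_mul
    ((Real.sqrt (2 * Real.pi))⁻¹)
  apply h.congr
  refine Filter.Eventually.of_forall fun x => ?_
  ring_nf

lemma StdGaussianAux.hyperplane_null {Ω : Type*} [MeasurableSpace Ω]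
    (μ : Measure Ω) [IsProbabilityMeasure μ]
    (Z : Ω → EuclideanSpace ℝ (Fin m)) (hZmeas : Measurable Z)
    (h1 : ∀ i, Measure.map (fun ω => Z ω i) μ = ProbabilityTheory.gaussianReal 0 1)
    (h2 : ProbabilityTheory.iIndepFun (β := fun _ : Fin m => ℝ)
      (fun i ω => Z ω i) μ)
    (d : EuclideanSpace ℝ (Fin m)) (hd : d ≠ 0) (c : ℝ) :
    μ {ω | ⟪Z ω, d⟫ = c} = 0 := by
  obtain ⟨i₀, hi₀⟩ : ∃ i, d i ≠ 0 := by
    by_contra h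
    push_neg at h
    exact hd (PiLp.ext h)
  have hZi : ∀ i, Measurable fun ω => Z ω i := fun i =>
    (measurable_pi_apply i).comp ((WithLp.measurable_ofLp _ _).comp hZmeas)
  set T : Finset (Fin m) := {i₀}ᶜ with hT
  set W : Ω → (T → ℝ) := fun ω (j : T) => Z ω j with hW
  have hWmeas : Measurable W := measurable_pi_lambda _ fun j => hZi j
  set X : Ω → ℝ := fun ω => Z ω i₀ with hX
  have hIndep : ProbabilityTheory.IndepFun W X μ := by
    have h := h2.indepFun_finset T {i₀} (by simp [hT]) hZi
    have h' := h.comp (measurable_id)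
      (measurable_pi_apply (⟨i₀, by simp⟩ : ({i₀} : Finset (Fin m))))
    exact h'
  set ψ : (T → ℝ) → ℝ := fun w => ∑ j : T, w j * d j with hψ
  have hψmeas : Measurable ψ := by
    apply Finset.measurable_sum
    intro j _
    exact (measurable_pi_apply j).mul_const _
  set φ : (T → ℝ) × ℝ → ℝ := fun p => ψ p.1 + p.2 * d i₀ with hφ
  have hφmeas : Measurable φ := (hψmeas.comp measurable_fst).add (measurable_snd.mul_const _)
  have hset : {ω | ⟪Z ω, d⟫ = c} = (fun ω => (W ω, X ω)) ⁻¹' {p | φ p = c} := by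
    ext ω
    simp only [Set.mem_setOf_eq, Set.mem_preimage, hφ, hψ, hW, hX]
    have : ⟪Z ω, d⟫ = ∑ j : T, Z ω j * d j + Z ω i₀ * d i₀ := by
      rw [PiLp.inner_apply]
      simp only [RCLike.inner_apply, conj_trivial]
      rw [Finset.sum_coe_sort T (fun j => Z ω j * d j)]
      rw [Finset.sum_congr rfl fun j _ => mul_comm (d j) (Z ω j)]
      rw [← Finset.sum_compl_add_sum ({i₀} : Finset (Fin m)) (fun j => Z ω j * d j)]
      simp [hT]
    rw [this]
  rw [hset]
  have hmap : Measure.map (fun ω => (W ω, X ω)) μ = (Measure.map W μ).prod (Measure.map X μ) :=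
    (ProbabilityTheory.indepFun_iff_map_prod_eq_prod_map_map hWmeas.aemeasurable
      (hZi i₀).aemeasurable).mp hIndep
  have hmeasset : MeasurableSet {p : (T → ℝ) × ℝ | φ p = c} := hφmeas (measurableSet_singleton c)
  rw [← Measure.map_apply (hWmeas.prodMk (hZi i₀)) hmeasset, hmap]
  haveI : SFinite (Measure.map W μ) := by
    haveI : IsProbabilityMeasure (Measure.map W μ) := Measure.isProbabilityMeasure_map hWmeas.aemeasurable
    infer_instance
  rw [Measure.prod_apply hmeasset]
  have hinner : ∀ w : T → ℝ, (Measure.map X μ) (Prod.mk w ⁻¹' {p | φ p = c}) = 0 := by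
    intro w
    have : Prod.mk w ⁻¹' {p : (T → ℝ) × ℝ | φ p = c} = {(c - ψ w) / d i₀} := by
      ext x
      simp only [Set.mem_preimage, Set.mem_setOf_eq, Set.mem_singleton_iff, hφ]
      rw [eq_div_iff hi₀]
      constructor <;> intro h <;> linarith
    rw [this, hX, h1 i₀]
    exact ProbabilityTheory.gaussianReal_absolutelyContinuous 0 one_ne_zero
      (measure_singleton _)
  have h0 : ∀ w, (Measure.map X μ) {a | φ (w, a) = c} = 0 := fun w => hinner w
  simp [h0]

lemma StdGaussianAux.cont_sup (Y : Finset (EuclideanSpace ℝ (Fin m))) (hY : Y.Nonempty) :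
    Continuous fun z : EuclideanSpace ℝ (Fin m) => Y.sup' hY fun y => ⟪z, y⟫ := by
  induction hY using Finset.Nonempty.cons_induction with
  | singleton a =>
      show Continuous fun z : EuclideanSpace ℝ (Fin m) => ⟪z, a⟫
      exact continuous_id.inner continuous_const
  | cons a s ha hs ih =>
      simp only [Finset.sup'_cons hs]
      exact (continuous_id.inner continuous_const).max ih

lemma StdGaussianAux.integrable_inner_aux {Ω : Type*} [MeasurableSpace Ω]
    (μ : Measure Ω) [IsProbabilityMeasure μ]
    (Z : Ω → EuclideanSpace ℝ (Fin m)) (hZmeas : Measurable Z)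
    (h1 : ∀ i, Measure.map (fun ω => Z ω i) μ = ProbabilityTheory.gaussianReal 0 1)
    (θ y : EuclideanSpace ℝ (Fin m)) : Integrable (fun ω => ⟪θ + Z ω, y⟫) μ := by
  have hZi : ∀ i, Integrable (fun ω => Z ω i) μ := by
    intro i
    have hm : Measurable fun ω => Z ω i := (measurable_pi_apply i).comp ((WithLp.measurable_ofLp _ _).comp hZmeas)
    have hgauss : Integrable (fun x : ℝ => x) (Measure.map (fun ω => Z ω i) μ) := by
      rw [h1 i]; exact StdGaussianAux.gauss_int
    have := (integrable_map_measure aestronglyMeasurable_id hm.aemeasurable).mp hgauss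
    simpa [Function.comp] using this
  have : (fun ω => ⟪θ + Z ω, y⟫) = fun ω => ∑ i, (θ i + Z ω i) * y i := by
    funext ω
    rw [PiLp.inner_apply]
    simp [RCLike.inner_apply]
    exact Finset.sum_congr rfl (fun i _ => mul_comm _ _)
  rw [this]
  apply integrable_finset_sum
  intro i _
  exact ((integrable_const (θ i)).add (hZi i)).mul_const (y i)

lemma StdGaussianAux.integrable_sup_aux {Ω : Type*} [MeasurableSpace Ω]
    (μ : Measure Ω) [IsProbabilityMeasure μ]
    (Y : Finset (EuclideanSpace ℝ (Fin m))) (hY : Y.Nonempty)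
    (Z : Ω → EuclideanSpace ℝ (Fin m)) (hZmeas : Measurable Z)
    (h1 : ∀ i, Measure.map (fun ω => Z ω i) μ = ProbabilityTheory.gaussianReal 0 1)
    (θ : EuclideanSpace ℝ (Fin m)) :
    Integrable (fun ω => Y.sup' hY fun y => ⟪θ + Z ω, y⟫) μ := by
  have hmeas : AEStronglyMeasurable (fun ω => Y.sup' hY fun y => ⟪θ + Z ω, y⟫) μ := by
    exact (((StdGaussianAux.cont_sup Y hY).comp
      (continuous_const.add continuous_id)).measurable.comp hZmeas).aestronglyMeasurable
  refine Integrable.mono' (g := fun ω => ∑ y ∈ Y, |⟪θ + Z ω, y⟫|)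
    (integrable_finset_sum _ fun y _ =>
      (StdGaussianAux.integrable_inner_aux μ Z hZmeas h1 θ y).abs) hmeas ?_
  refine Filter.Eventually.of_forall fun ω => ?_
  obtain ⟨y₀, hy₀, hval⟩ := Finset.exists_mem_eq_sup' hY (fun y => ⟪θ + Z ω, y⟫)
  rw [Real.norm_eq_abs, hval]
  exact Finset.single_le_sum (f := fun y => |⟪θ + Z ω, y⟫|) (fun y _ => abs_nonneg _) hy₀

end Aux

/-- First-order optimality for the perturbed loss: if `θ̂` minimizes
`L(θ) = E[max_{y ∈ Y}(θ+Z)ᵀy] − θᵀy*` over `ℝ^m`, then the expected perturbed CO-layer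
solution equals the target full-information solution:
`E[argmax_{y ∈ Y}(θ̂+Z)ᵀy] = y*`. -/
theorem minimizer_expected_argmax_eq_target {m : ℕ} {Ω : Type*} [MeasurableSpace Ω]
    (μ : Measure Ω) [IsProbabilityMeasure μ]
    (Y : Finset (EuclideanSpace ℝ (Fin m))) (hY : Y.Nonempty)
    (ystar : EuclideanSpace ℝ (Fin m)) (hystar : ystar ∈ Y)
    (Z : Ω → EuclideanSpace ℝ (Fin m)) (hZmeas : Measurable Z)
    (hZ : IsStdGaussian μ Z)
    (g : EuclideanSpace ℝ (Fin m) → EuclideanSpace ℝ (Fin m))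
    (hgmeas : Measurable g)
    (hg : ∀ z, g z ∈ Y ∧ ∀ y ∈ Y, ⟪z, y⟫ ≤ ⟪z, g z⟫)
    (θhat : EuclideanSpace ℝ (Fin m))
    (hmin : ∀ θ : EuclideanSpace ℝ (Fin m),
      (∫ ω, Y.sup' hY (fun y => ⟪θhat + Z ω, y⟫) ∂μ) - ⟪θhat, ystar⟫ ≤
        (∫ ω, Y.sup' hY (fun y => ⟪θ + Z ω, y⟫) ∂μ) - ⟪θ, ystar⟫) :
    ∫ ω, g (θhat + Z ω) ∂μ = ystar := by
  obtain ⟨h1, h2⟩ := hZ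
  have hgY : ∀ z, g z ∈ Y := fun z => (hg z).1
  have hsupeq : ∀ z : EuclideanSpace ℝ (Fin m),
      (Y.sup' hY fun y => ⟪z, y⟫) = ⟪z, g z⟫ := fun z =>
    le_antisymm (Finset.sup'_le _ _ fun y hy => (hg z).2 y hy)
      (Finset.le_sup' (fun y => ⟪z, y⟫) (hgY z))
  have hIntSup : ∀ θ, Integrable (fun ω => Y.sup' hY fun y => ⟪θ + Z ω, y⟫) μ := fun θ =>
    StdGaussianAux.integrable_sup_aux μ Y hY Z hZmeas h1 θ
  have hgmeas' : ∀ θ : EuclideanSpace ℝ (Fin m),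
      AEStronglyMeasurable (fun ω => g (θ + Z ω)) μ := fun θ =>
    (hgmeas.comp (measurable_const.add hZmeas)).aestronglyMeasurable
  set C : ℝ := Y.sup' hY (fun y => ‖y‖) with hC
  have hnorm : ∀ z, ‖g z‖ ≤ C := fun z => Finset.le_sup' (fun y => ‖y‖) (hgY z)
  have hIntg : ∀ θ : EuclideanSpace ℝ (Fin m), Integrable (fun ω => g (θ + Z ω)) μ := fun θ =>
    Integrable.mono' (integrable_const C) (hgmeas' θ)
      (Filter.Eventually.of_forall fun ω => hnorm _)
  -- integrated subgradient inequality
  have hsub : ∀ θ v : EuclideanSpace ℝ (Fin m),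
      (∫ ω, Y.sup' hY (fun y => ⟪θ + Z ω, y⟫) ∂μ) + ⟪v, ∫ ω, g (θ + Z ω) ∂μ⟫ ≤
        ∫ ω, Y.sup' hY (fun y => ⟪θ + v + Z ω, y⟫) ∂μ := by
    intro θ v
    rw [← integral_inner (hIntg θ) v, ← integral_add (hIntSup θ) ((hIntg θ).const_inner v)]
    refine integral_mono ((hIntSup θ).add ((hIntg θ).const_inner v)) (hIntSup (θ + v)) ?_
    intro ω
    simp only
    rw [hsupeq (θ + Z ω)]
    have heq : ⟪θ + Z ω, g (θ + Z ω)⟫ + ⟪v, g (θ + Z ω)⟫ = ⟪θ + v + Z ω, g (θ + Z ω)⟫ := by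
      rw [← inner_add_left]
      congr 1
      rw [add_right_comm]
    rw [heq]
    exact Finset.le_sup' (fun y => ⟪θ + v + Z ω, y⟫) (hgY _)
  -- key inequality at perturbed points
  have hkey : ∀ (v : EuclideanSpace ℝ (Fin m)) (t : ℝ), 0 < t →
      ⟪v, ystar⟫ ≤ ⟪v, ∫ ω, g (θhat + t • v + Z ω) ∂μ⟫ := by
    intro v t ht
    have hm' := hmin (θhat + t • v)
    have hs' := hsub (θhat + t • v) (-(t • v))
    simp only [add_neg_cancel_right] at hs'
    have e1 : ⟪θhat + t • v, ystar⟫ = ⟪θhat, ystar⟫ + t * ⟪v, ystar⟫ := by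
      rw [inner_add_left, real_inner_smul_left]
    have e2 : ⟪-(t • v), ∫ ω, g (θhat + t • v + Z ω) ∂μ⟫ =
        -(t * ⟪v, ∫ ω, g (θhat + t • v + Z ω) ∂μ⟫) := by
      rw [inner_neg_left, real_inner_smul_left]
    rw [e1] at hm'
    rw [e2] at hs'
    have ht' : t * ⟪v, ystar⟫ ≤ t * ⟪v, ∫ ω, g (θhat + t • v + Z ω) ∂μ⟫ := by linarith
    exact le_of_mul_le_mul_left ht' ht
  -- a.e. strictness of the argmax
  have hae : ∀ᵐ ω ∂μ, ∀ y ∈ Y, y ≠ g (θhat + Z ω) →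
      ⟪θhat + Z ω, y⟫ < ⟪θhat + Z ω, g (θhat + Z ω)⟫ := by
    have hall : ∀ᵐ ω ∂μ, ∀ y ∈ (Y : Set (EuclideanSpace ℝ (Fin m))),
        ∀ y' ∈ (Y : Set (EuclideanSpace ℝ (Fin m))), y ≠ y' → ⟪θhat + Z ω, y - y'⟫ ≠ 0 := by
      rw [ae_ball_iff Y.countable_toSet]
      intro y hy
      rw [ae_ball_iff Y.countable_toSet]
      intro y' hy'
      rw [eventually_imp_distrib_left]
      intro hne
      have hnull := StdGaussianAux.hyperplane_null μ Z hZmeas h1 h2 (y - y')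
        (sub_ne_zero.mpr hne) (-⟪θhat, y - y'⟫)
      rw [ae_iff]
      convert hnull using 2
      ext ω
      simp only [Set.mem_setOf_eq, not_not]
      constructor
      · intro h
        have := inner_add_left (𝕜 := ℝ) θhat (Z ω) (y - y')
        linarith [h, this]
      · intro h
        have := inner_add_left (𝕜 := ℝ) θhat (Z ω) (y - y')
        linarith [h, this]
    filter_upwards [hall] with ω hω y hy hyne
    have hle := (hg (θhat + Z ω)).2 y hy
    have hne' := hω y hy (g (θhat + Z ω)) (hgY _) hyne
    rw [inner_sub_right] at hne'
    exact lt_of_le_of_ne hle (fun h => hne' (by linarith))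
  -- continuity of the expected argmax along 1/(n+1) perturbations
  have hcont : ∀ v : EuclideanSpace ℝ (Fin m),
      Tendsto (fun n : ℕ => ∫ ω, g (θhat + (1 / (n + 1 : ℝ)) • v + Z ω) ∂μ) atTop
        (𝓝 (∫ ω, g (θhat + Z ω) ∂μ)) := by
    intro v
    apply tendsto_integral_of_dominated_convergence (bound := fun _ => C)
    · intro n; exact hgmeas' _
    · exact integrable_const C
    · intro n; exact Filter.Eventually.of_forall fun ω => hnorm _
    · filter_upwards [hae] with ω hω
      have harg : ∀ n : ℕ, θhat + (1 / (n + 1 : ℝ)) • v + Z ω =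
          (θhat + Z ω) + (1 / (n + 1 : ℝ)) • v := fun n => add_right_comm _ _ _
      have ht0 : Tendsto (fun n : ℕ => (1 / (n + 1 : ℝ))) atTop (𝓝 0) :=
        tendsto_one_div_add_atTop_nhds_zero_nat
      set w : EuclideanSpace ℝ (Fin m) := θhat + Z ω with hw
      have hlim : ∀ y : EuclideanSpace ℝ (Fin m),
          Tendsto (fun n : ℕ => ⟪w + (1 / (n + 1 : ℝ)) • v, y⟫) atTop (𝓝 ⟪w, y⟫) := by
        intro y
        have : ∀ n : ℕ, ⟪w + (1 / (n + 1 : ℝ)) • v, y⟫ =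
            ⟪w, y⟫ + (1 / (n + 1 : ℝ)) * ⟪v, y⟫ := by
          intro n
          rw [inner_add_left, real_inner_smul_left]
        simp only [this]
        have := tendsto_const_nhds (α := ℕ) (x := ⟪w, y⟫) |>.add (ht0.mul_const ⟪v, y⟫)
        simpa using this
      have hev : ∀ᶠ n : ℕ in atTop, ∀ y ∈ (Y : Set (EuclideanSpace ℝ (Fin m))), y ≠ g w →
          ⟪w + (1 / (n + 1 : ℝ)) • v, y⟫ < ⟪w + (1 / (n + 1 : ℝ)) • v, g w⟫ := by
        rw [eventually_all_finite Y.finite_toSet]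
        intro y hy
        rw [eventually_imp_distrib_left]
        intro hyne
        exact (hlim y).eventually_lt (hlim (g w)) (hω y hy hyne)
      refine Tendsto.congr' ?_ (tendsto_const_nhds (x := g w))
      filter_upwards [hev] with n hn
      rw [harg n]
      by_contra hne
      have hmax := (hg (w + (1 / (n + 1 : ℝ)) • v)).2 (g w) (hgY w)
      have hlt := hn (g (w + (1 / (n + 1 : ℝ)) • v)) (hgY _) (fun h => hne h.symm)
      exact absurd hmax (not_le.mpr hlt)
  -- conclude
  have hfin : ∀ v : EuclideanSpace ℝ (Fin m), ⟪v, ystar⟫ ≤ ⟪v, ∫ ω, g (θhat + Z ω) ∂μ⟫ := by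
    intro v
    refine ge_of_tendsto (tendsto_const_nhds.inner (hcont v)) ?_
    exact Filter.Eventually.of_forall fun n => hkey v (1 / (n + 1 : ℝ)) (by positivity)
  have hv := hfin (ystar - ∫ ω, g (θhat + Z ω) ∂μ)
  have hself : ⟪ystar - ∫ ω, g (θhat + Z ω) ∂μ, ystar - ∫ ω, g (θhat + Z ω) ∂μ⟫ ≤ 0 := by
    rw [inner_sub_right]
    linarith
  have h0 := real_inner_self_nonpos.mp hself
  have := sub_eq_zero.mp h0
  exact this.symm
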